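/- Let A be an n×n real symmetric positive semidefinite matrix and B an n×n real symmetric positive definite matrix, and let λ₁(B) denote the largest eigenvalue of B. Then the constant L₊ = 2λ₁(B) is a positive Lipschitz constant for f: for every x ∈ ℝⁿ with xᵀAx > 0, the matrix 2λ₁(B)·I − H_f(x) is positive semidefinite, where H_f(x) = 2B − A/(xᵀAx)^{1/2} + (Ax)(Ax)ᵀ/(xᵀAx)^{3/2} is the Hessian of f at x. -/

import Mathlib

open Matrix

/-- If `l` bounds the spectrum of a hermitian real matrix `B`, then `l•1 - B` is PSD. -/
lemma aux_smul_one_sub_posSemidef {n : ℕ} {B : Matrix (Fin n) (Fin n) ℝ}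
    (hB : B.IsHermitian) {l : ℝ} (hl : ∀ μ ∈ spectrum ℝ B, μ ≤ l) :
    (l • (1 : Matrix (Fin n) (Fin n) ℝ) - B).PosSemidef := by
  have hU : (hB.eigenvectorUnitary : Matrix (Fin n) (Fin n) ℝ) *
      star (hB.eigenvectorUnitary : Matrix (Fin n) (Fin n) ℝ) = 1 :=
    Matrix.mem_unitaryGroup_iff.mp hB.eigenvectorUnitary.2
  have h1 : l • (1 : Matrix (Fin n) (Fin n) ℝ) - B =
      (hB.eigenvectorUnitary : Matrix (Fin n) (Fin n) ℝ) *
        diagonal (fun i => l - hB.eigenvalues i) *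
        star (hB.eigenvectorUnitary : Matrix (Fin n) (Fin n) ℝ) := by
    have hd : diagonal (fun i => l - hB.eigenvalues i) =
        l • (1 : Matrix (Fin n) (Fin n) ℝ) - diagonal (RCLike.ofReal ∘ hB.eigenvalues) := by
      rw [← diagonal_sub, Matrix.smul_one_eq_diagonal]
      congr 1
    rw [hd, Matrix.mul_sub, Matrix.sub_mul, Matrix.mul_smul, Matrix.mul_one,
      Matrix.smul_mul, hU]
    have hsp := hB.spectral_theorem
    rw [Unitary.conjStarAlgAut_apply] at hsp
    rw [← hsp]
  rw [h1]
  have hdpsd : (diagonal (fun i => l - hB.eigenvalues i)).PosSemidef :=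
    Matrix.posSemidef_diagonal_iff.mpr fun i =>
      sub_nonneg.mpr (hl _ (hB.eigenvalues_mem_spectrum_real i))
  simpa [Matrix.star_eq_conjTranspose] using hdpsd.mul_mul_conjTranspose_same
    (hB.eigenvectorUnitary : Matrix (Fin n) (Fin n) ℝ)

open scoped MatrixOrder in
/-- Cauchy–Schwarz for a real PSD matrix. -/
lemma aux_cs {n : ℕ} {A : Matrix (Fin n) (Fin n) ℝ} (hA : A.PosSemidef)
    (x y : Fin n → ℝ) :
    (y ⬝ᵥ A *ᵥ x) ^ 2 ≤ (y ⬝ᵥ A *ᵥ y) * (x ⬝ᵥ A *ᵥ x) := by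
  obtain ⟨C, rfl⟩ := CStarAlgebra.nonneg_iff_eq_star_mul_self.mp hA.nonneg
  simp only [Matrix.star_eq_conjTranspose]
  have e : ∀ u w : Fin n → ℝ, u ⬝ᵥ (Cᴴ * C) *ᵥ w = (C *ᵥ u) ⬝ᵥ (C *ᵥ w) := by
    intro u w
    rw [← Matrix.mulVec_mulVec, Matrix.dotProduct_mulVec, Matrix.conjTranspose_eq_transpose_of_trivial,
      Matrix.vecMul_transpose]
  rw [e, e, e]
  calc (∑ i, (C *ᵥ y) i * (C *ᵥ x) i) ^ 2
      ≤ (∑ i, (C *ᵥ y) i ^ 2) * (∑ i, (C *ᵥ x) i ^ 2) :=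
        Finset.sum_mul_sq_le_sq_mul_sq _ _ _
    _ = (C *ᵥ y) ⬝ᵥ (C *ᵥ y) * ((C *ᵥ x) ⬝ᵥ (C *ᵥ x)) := by simp [dotProduct, sq]

/-- `L₊ = 2λ₁(B)` is a positive Lipschitz constant for `f`: for every `x` with `xᵀAx > 0`,
`2λ₁(B)·I − H_f(x)` is positive semidefinite, where
`H_f(x) = 2B − A/√(xᵀAx) + (Ax)(Ax)ᵀ/(xᵀAx)^{3/2}`. -/
theorem stmt_5 {n : ℕ} (A B : Matrix (Fin n) (Fin n) ℝ)
    (hA : A.PosSemidef) (hB : B.PosDef) (lamB : ℝ)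
    (hlamB : IsGreatest (spectrum ℝ B) lamB)
    (x : Fin n → ℝ) (hx : 0 < x ⬝ᵥ A *ᵥ x) :
    ((2 * lamB) • (1 : Matrix (Fin n) (Fin n) ℝ)
      - ((2 : ℝ) • B - (Real.sqrt (x ⬝ᵥ A *ᵥ x))⁻¹ • A
        + ((Real.sqrt (x ⬝ᵥ A *ᵥ x)) ^ 3)⁻¹ • vecMulVec (A *ᵥ x) (A *ᵥ x))).PosSemidef := by
  set s := Real.sqrt (x ⬝ᵥ A *ᵥ x) with hs_def
  have hs : 0 < s := Real.sqrt_pos.mpr hx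
  have hs2 : s ^ 2 = x ⬝ᵥ A *ᵥ x := Real.sq_sqrt hx.le
  set v := A *ᵥ x with hv_def
  have hM1 : (lamB • (1 : Matrix (Fin n) (Fin n) ℝ) - B).PosSemidef :=
    aux_smul_one_sub_posSemidef hB.isHermitian (fun μ hμ => hlamB.2 hμ)
  refine Matrix.PosSemidef.of_dotProduct_mulVec_nonneg ?_ ?_
  · -- Hermitian
    apply Matrix.IsHermitian.ext
    intro i j
    simp only [Matrix.sub_apply, Matrix.add_apply, Matrix.smul_apply, Matrix.one_apply,
      Matrix.vecMulVec_apply, smul_eq_mul, star_trivial]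
    rw [hA.isHermitian.apply j i |>.symm, hB.isHermitian.apply j i |>.symm]
    simp only [star_trivial]
    rw [mul_comm (v j) (v i)]
    by_cases h : i = j <;> simp [h, Matrix.one_apply, eq_comm]
  · intro y
    have hvy : Matrix.vecMulVec v v *ᵥ y = (v ⬝ᵥ y) • v := by
      ext i
      simp [Matrix.vecMulVec_apply, Matrix.mulVec, dotProduct, Finset.mul_sum, mul_comm,
        mul_left_comm]
    have hq :
        star y ⬝ᵥ (((2 * lamB) • (1 : Matrix (Fin n) (Fin n) ℝ)
          - ((2 : ℝ) • B - s⁻¹ • A + (s ^ 3)⁻¹ • vecMulVec v v)) *ᵥ y)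
        = 2 * lamB * (y ⬝ᵥ y) - 2 * (y ⬝ᵥ B *ᵥ y) + s⁻¹ * (y ⬝ᵥ A *ᵥ y)
          - (s ^ 3)⁻¹ * (v ⬝ᵥ y) ^ 2 := by
      simp only [star_trivial, Matrix.sub_mulVec, Matrix.add_mulVec, Matrix.smul_mulVec,
        Matrix.one_mulVec, dotProduct_sub, dotProduct_add, dotProduct_smul, hvy,
        smul_eq_mul, dotProduct_smul]
      ring_nf
      rw [dotProduct_comm y v]
      ring
    rw [hq]
    have h1 : y ⬝ᵥ B *ᵥ y ≤ lamB * (y ⬝ᵥ y) := by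
      have := hM1.dotProduct_mulVec_nonneg y
      simp only [star_trivial, Matrix.sub_mulVec, Matrix.smul_mulVec, Matrix.one_mulVec,
        dotProduct_sub, dotProduct_smul, smul_eq_mul] at this
      linarith
    have h2 : (v ⬝ᵥ y) ^ 2 ≤ (y ⬝ᵥ A *ᵥ y) * (x ⬝ᵥ A *ᵥ x) := by
      rw [dotProduct_comm v y, hv_def]
      exact aux_cs hA x y
    have hAy : 0 ≤ y ⬝ᵥ A *ᵥ y := hA.re_dotProduct_nonneg y
    have key : (s ^ 3)⁻¹ * (v ⬝ᵥ y) ^ 2 ≤ s⁻¹ * (y ⬝ᵥ A *ᵥ y) := by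
      have h3 : (s ^ 3)⁻¹ * (v ⬝ᵥ y) ^ 2 ≤ (s ^ 3)⁻¹ * ((y ⬝ᵥ A *ᵥ y) * (x ⬝ᵥ A *ᵥ x)) :=
        mul_le_mul_of_nonneg_left h2 (by positivity)
      calc (s ^ 3)⁻¹ * (v ⬝ᵥ y) ^ 2 ≤ (s ^ 3)⁻¹ * ((y ⬝ᵥ A *ᵥ y) * (x ⬝ᵥ A *ᵥ x)) := h3
        _ = s⁻¹ * (y ⬝ᵥ A *ᵥ y) := by
            rw [← hs2]; field_simp
    linarith
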